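/- arXiv:1304.0994 — 3 statements merged into one kernel-verified Lean document; each statement's English description precedes it below -/
import Mathlib

section
/- Let Λ : (0,1] → ℝ be a positive decreasing differentiable function with Λ(0⁺) = +∞ and t·Λ(t) → 0 as t → 0⁺. Then the integrals ∫_0 √(Λ(t)/t) dt and ∫_0 |Λ'(t)| √(t/Λ(t)) dt converge or diverge simultaneously. -/
open Set Filter MeasureTheory Topology

/-- Key abstract lemma: if `F' = (g - h)/2` on `(0,1)`, with `g` continuous there,
`g, h, F ≥ 0`, and `F → 0` at `0⁺`, then `g` and `h` are simultaneously integrable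
near `0`. -/
lemma key_lemma (g h F : ℝ → ℝ) {ε : ℝ} (hε : 0 < ε) (hε1 : ε < 1)
    (gc : ∀ t ∈ Ioo (0:ℝ) 1, ContinuousAt g t)
    (gnn : ∀ t, 0 ≤ g t) (hnn : ∀ t, 0 ≤ h t) (Fnn : ∀ t, 0 ≤ F t)
    (hFd : ∀ t ∈ Ioo (0:ℝ) 1, HasDerivAt F ((g t - h t) / 2) t)
    (hF0 : Tendsto F (nhdsWithin 0 (Ioi 0)) (nhds 0)) :
    IntegrableOn g (Ioc 0 ε) ↔ IntegrableOn h (Ioc 0 ε) := by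
  set a : ℕ → ℝ := fun n => ε * (1 / (n + 1)) with ha_def
  have hapos : ∀ n : ℕ, 0 < a n := fun n => by positivity
  have haε : ∀ n : ℕ, a n ≤ ε := by
    intro n
    have h1 : (1:ℝ) / (n + 1) ≤ 1 := by
      rw [div_le_one (by positivity)]
      linarith [Nat.cast_nonneg (α := ℝ) n]
    calc ε * (1 / (n + 1)) ≤ ε * 1 := by nlinarith
    _ = ε := mul_one ε
  have ha0 : Tendsto a atTop (𝓝 0) := by
    have := tendsto_one_div_add_atTop_nhds_zero_nat.const_mul ε
    simpa [ha_def, mul_comm] using this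
  have hsub : ∀ n : ℕ, Icc (a n) ε ⊆ Ioo (0:ℝ) 1 := fun n t ht =>
    ⟨lt_of_lt_of_le (hapos n) ht.1, lt_of_le_of_lt ht.2 hε1⟩
  have hsub' : ∀ n : ℕ, Ioc (a n) ε ⊆ Ioc (0:ℝ) ε := fun n t ht =>
    ⟨(hapos n).trans ht.1, ht.2⟩
  have hgc : ∀ n : ℕ, ContinuousOn g (Icc (a n) ε) := fun n t ht =>
    (gc t (hsub n ht)).continuousWithinAt
  have hgint : ∀ n : ℕ, IntegrableOn g (Ioc (a n) ε) := fun n =>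
    ((hgc n).integrableOn_Icc).mono_set Ioc_subset_Icc_self
  have hFa : Tendsto (fun n => F (a n)) atTop (𝓝 0) := by
    apply hF0.comp
    rw [tendsto_nhdsWithin_iff]
    exact ⟨ha0, Eventually.of_forall fun n => hapos n⟩
  have hnormh : (fun x : ℝ => ‖h x‖) = h := funext fun x => Real.norm_of_nonneg (hnn x)
  have hnormg : (fun x : ℝ => ‖g x‖) = g := funext fun x => Real.norm_of_nonneg (gnn x)
  constructor
  · intro hg
    have main : ∀ n : ℕ, IntegrableOn h (Ioc (a n) ε) ∧
        (∫ x in Ioc (a n) ε, h x) ≤ (∫ x in Ioc 0 ε, g x) + 2 * F (a n) := by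
      intro n
      rcases le_or_gt ε (a n) with hle | hlt
      · rw [Ioc_eq_empty (not_lt.2 hle)]
        refine ⟨integrableOn_empty, ?_⟩
        simp only [Measure.restrict_empty, integral_zero_measure]
        have h1 : 0 ≤ ∫ x in Ioc (0:ℝ) ε, g x :=
          setIntegral_nonneg measurableSet_Ioc fun t _ => gnn t
        nlinarith [Fnn (a n)]
      set δ := a n with hδdef
      have hδ0 : 0 < δ := hapos n
      have hδε : δ ≤ ε := hlt.le
      have hprim : ∀ t ∈ Icc δ ε, HasDerivAt (fun u => ∫ s in δ..u, g s) (g t) t := by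
        intro t ht
        have hInt : IntervalIntegrable g MeasureTheory.volume δ t := by
          rw [intervalIntegrable_iff_integrableOn_Ioc_of_le ht.1]
          exact (hgint n).mono_set (Ioc_subset_Ioc_right ht.2)
        have hMeas : StronglyMeasurableAtFilter g (𝓝 t) MeasureTheory.volume :=
          ContinuousAt.stronglyMeasurableAtFilter isOpen_Ioo gc t (hsub n ht)
        exact intervalIntegral.integral_hasDerivAt_right hInt hMeas (gc t (hsub n ht))
      set Φ : ℝ → ℝ := fun t => (∫ s in δ..t, g s) / 2 - F t with hΦdef
      have hΦd : ∀ t ∈ Icc δ ε, HasDerivAt Φ (h t / 2) t := by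
        intro t ht
        have h1 := ((hprim t ht).div_const 2).sub (hFd t (hsub n ht))
        refine h1.congr_deriv ?_
        ring
      have hΦc : ContinuousOn Φ (Icc δ ε) := fun t ht =>
        (hΦd t ht).continuousAt.continuousWithinAt
      have hint2 : IntegrableOn (fun t => h t / 2) (Ioc δ ε) :=
        intervalIntegral.integrableOn_deriv_of_nonneg hΦc (fun t ht => hΦd t (Ioo_subset_Icc_self ht))
          (fun t _ => div_nonneg (hnn t) (by norm_num))
      have hinth : IntegrableOn h (Ioc δ ε) := by
        have h2 := hint2.const_mul 2
        have h3 : (fun t : ℝ => 2 * (h t / 2)) = h := funext fun t => by ring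
        rwa [h3] at h2
      have hFTC : ∫ t in δ..ε, h t / 2 = Φ ε - Φ δ :=
        intervalIntegral.integral_eq_sub_of_hasDerivAt_of_le hδε hΦc
          (fun t ht => hΦd t (Ioo_subset_Icc_self ht))
          ((intervalIntegrable_iff_integrableOn_Ioc_of_le hδε).2 hint2)
      have heq : (∫ x in Ioc δ ε, h x) = (∫ x in Ioc δ ε, g x) - 2 * F ε + 2 * F δ := by
        have e1 : (∫ t in δ..ε, h t / 2) = (∫ x in Ioc δ ε, h x) / 2 := by
          rw [intervalIntegral.integral_of_le hδε, integral_div]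
        have e2 : Φ ε - Φ δ = (∫ x in Ioc δ ε, g x) / 2 - F ε + F δ := by
          simp only [hΦdef, intervalIntegral.integral_same]
          rw [intervalIntegral.integral_of_le hδε]
          ring
        rw [e1, e2] at hFTC
        linarith
      have hbound : (∫ x in Ioc δ ε, g x) ≤ ∫ x in Ioc 0 ε, g x :=
        setIntegral_mono_set hg (Eventually.of_forall fun t => gnn t)
          ((hsub' n).eventuallyLE)
      refine ⟨hinth, ?_⟩
      rw [heq]
      have := Fnn ε
      linarith
    have hbnd : ∀ᶠ n in atTop,
        (∫ x in Ioc (a n) ε, ‖h x‖) ≤ (∫ x in Ioc 0 ε, g x) + 2 := by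
      filter_upwards [hFa.eventually_le_const (by norm_num : (0:ℝ) < 1)] with n hn
      have h1 := (main n).2
      simp only [hnormh]
      linarith
    exact integrableOn_Ioc_of_intervalIntegral_norm_bounded_left
      (fun n => (main n).1) ha0 hbnd
  · intro hh
    have main : ∀ n : ℕ,
        (∫ x in Ioc (a n) ε, g x) ≤ (∫ x in Ioc 0 ε, h x) + 2 * F ε := by
      intro n
      rcases le_or_gt ε (a n) with hle | hlt
      · rw [Ioc_eq_empty (not_lt.2 hle)]
        simp only [Measure.restrict_empty, integral_zero_measure]
        have h1 : 0 ≤ ∫ x in Ioc (0:ℝ) ε, h x :=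
          setIntegral_nonneg measurableSet_Ioc fun t _ => hnn t
        nlinarith [Fnn ε]
      set δ := a n with hδdef
      have hδ0 : 0 < δ := hapos n
      have hδε : δ ≤ ε := hlt.le
      have hFc : ContinuousOn F (Icc δ ε) := fun t ht =>
        (hFd t (hsub n ht)).continuousAt.continuousWithinAt
      have hgi : IntervalIntegrable g MeasureTheory.volume δ ε :=
        (intervalIntegrable_iff_integrableOn_Ioc_of_le hδε).2 (hgint n)
      have hhi : IntervalIntegrable h MeasureTheory.volume δ ε :=
        (intervalIntegrable_iff_integrableOn_Ioc_of_le hδε).2 (hh.mono_set (hsub' n))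
      have hFTC : ∫ t in δ..ε, (g t - h t) / 2 = F ε - F δ :=
        intervalIntegral.integral_eq_sub_of_hasDerivAt_of_le hδε hFc
          (fun t ht => hFd t (hsub n (Ioo_subset_Icc_self ht)))
          ((hgi.sub hhi).div_const 2)
      have e : (∫ t in δ..ε, (g t - h t) / 2)
          = ((∫ x in Ioc δ ε, g x) - ∫ x in Ioc δ ε, h x) / 2 := by
        rw [intervalIntegral.integral_of_le hδε, integral_div,
          integral_sub (hgint n) (hh.mono_set (hsub' n))]
      have hmono : (∫ x in Ioc δ ε, h x) ≤ ∫ x in Ioc 0 ε, h x :=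
        setIntegral_mono_set hh (Eventually.of_forall fun t => hnn t)
          ((hsub' n).eventuallyLE)
      rw [e] at hFTC
      have := Fnn δ
      linarith
    have hbnd : ∀ᶠ n in atTop,
        (∫ x in Ioc (a n) ε, ‖g x‖) ≤ (∫ x in Ioc 0 ε, h x) + 2 * F ε := by
      apply Eventually.of_forall
      intro n
      simp only [hnormg]
      exact main n
    exact integrableOn_Ioc_of_intervalIntegral_norm_bounded_left
      (fun n => hgint n) ha0 hbnd

theorem stmt2
    (Λ : ℝ → ℝ)
    (hpos : ∀ t ∈ Ioc (0:ℝ) 1, 0 < Λ t)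
    (hanti : StrictAntiOn Λ (Ioc (0:ℝ) 1))
    (hdiff : ∀ t ∈ Ioc (0:ℝ) 1, DifferentiableAt ℝ Λ t)
    (hinf : Tendsto Λ (nhdsWithin 0 (Ioi 0)) atTop)
    (hsmall : Tendsto (fun t => t * Λ t) (nhdsWithin 0 (Ioi 0)) (nhds 0)) :
    ((∃ ε > (0:ℝ), ε ≤ 1 ∧
        MeasureTheory.IntegrableOn (fun t => Real.sqrt (Λ t / t)) (Ioc 0 ε)) ↔
     (∃ ε > (0:ℝ), ε ≤ 1 ∧
        MeasureTheory.IntegrableOn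
          (fun t => |deriv Λ t| * Real.sqrt (t / Λ t)) (Ioc 0 ε))) := by
  set g : ℝ → ℝ := fun t => Real.sqrt (Λ t / t) with hgdef
  set h : ℝ → ℝ := fun t => |deriv Λ t| * Real.sqrt (t / Λ t) with hhdef
  set F : ℝ → ℝ := fun t => Real.sqrt (t * Λ t) with hFdef
  have gc : ∀ t ∈ Ioo (0:ℝ) 1, ContinuousAt g t := by
    intro t ht
    have h1 : ContinuousAt Λ t := (hdiff t ⟨ht.1, ht.2.le⟩).continuousAt
    exact Real.continuous_sqrt.continuousAt.comp
      (h1.div continuousAt_id (ne_of_gt ht.1))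
  have gnn : ∀ t, 0 ≤ g t := fun t => Real.sqrt_nonneg _
  have hnn : ∀ t, 0 ≤ h t := fun t => mul_nonneg (abs_nonneg _) (Real.sqrt_nonneg _)
  have Fnn : ∀ t, 0 ≤ F t := fun t => Real.sqrt_nonneg _
  have dnp : ∀ t ∈ Ioo (0:ℝ) 1, deriv Λ t ≤ 0 := by
    intro t ht
    have hd : HasDerivAt Λ (deriv Λ t) t := (hdiff t ⟨ht.1, ht.2.le⟩).hasDerivAt
    have hslope : Tendsto (slope Λ t) (nhdsWithin t (Ioi t)) (𝓝 (deriv Λ t)) :=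
      (hasDerivAt_iff_tendsto_slope.1 hd).mono_left
        (nhdsWithin_mono t fun s hs => (ne_of_gt hs : s ≠ t))
    refine le_of_tendsto hslope ?_
    filter_upwards [Ioo_mem_nhdsGT_of_mem ⟨le_refl t, ht.2⟩] with s hs
    have hΛs : Λ s < Λ t :=
      hanti ⟨ht.1, ht.2.le⟩ ⟨ht.1.trans hs.1, hs.2.le⟩ hs.1
    rw [slope_def_field]
    apply div_nonpos_iff.2
    right
    constructor <;> linarith [hs.1]
  have hFd : ∀ t ∈ Ioo (0:ℝ) 1, HasDerivAt F ((g t - h t) / 2) t := by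
    intro t ht
    have htpos : 0 < t := ht.1
    have hΛpos : 0 < Λ t := hpos t ⟨ht.1, ht.2.le⟩
    have hprod : 0 < t * Λ t := mul_pos htpos hΛpos
    have hd1 : HasDerivAt (fun u => u * Λ u) (1 * Λ t + t * deriv Λ t) t :=
      (hasDerivAt_id t).mul (hdiff t ⟨ht.1, ht.2.le⟩).hasDerivAt
    have hd2 := (Real.hasDerivAt_sqrt (ne_of_gt hprod)).comp t hd1
    refine hd2.congr_deriv ?_
    simp only [hgdef, hhdef]
    have habs : |deriv Λ t| = -deriv Λ t := abs_of_nonpos (dnp t ht)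
    have e1 : Real.sqrt (Λ t) * Real.sqrt (Λ t) = Λ t := Real.mul_self_sqrt hΛpos.le
    have e2 : Real.sqrt t * Real.sqrt t = t := Real.mul_self_sqrt htpos.le
    have hq1 : Real.sqrt (Λ t / t) = Real.sqrt (Λ t) / Real.sqrt t :=
      Real.sqrt_div hΛpos.le t
    have hq2 : Real.sqrt (t / Λ t) = Real.sqrt t / Real.sqrt (Λ t) :=
      Real.sqrt_div htpos.le (Λ t)
    have hq3 : Real.sqrt (t * Λ t) = Real.sqrt t * Real.sqrt (Λ t) :=
      Real.sqrt_mul htpos.le (Λ t)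
    have s1 : 0 < Real.sqrt t := Real.sqrt_pos.2 htpos
    have s2 : 0 < Real.sqrt (Λ t) := Real.sqrt_pos.2 hΛpos
    set d := deriv Λ t with hddef
    set x := Real.sqrt t with hxdef
    set y := Real.sqrt (Λ t) with hydef
    rw [habs, hq1, hq2, hq3, ← e1, ← e2]
    field_simp
    ring
  have hF0 : Tendsto F (nhdsWithin 0 (Ioi 0)) (nhds 0) := by
    have hsq : Tendsto Real.sqrt (𝓝 0) (𝓝 0) := by
      simpa using (Real.continuous_sqrt.tendsto 0)
    exact hsq.comp hsmall
  constructor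
  · rintro ⟨ε, hε, _, hint⟩
    set ε' := min ε (1/2) with hε'def
    have hε'0 : 0 < ε' := lt_min hε (by norm_num)
    have hε'1 : ε' < 1 := lt_of_le_of_lt (min_le_right _ _) (by norm_num)
    have hg' : IntegrableOn g (Ioc 0 ε') :=
      hint.mono_set (Ioc_subset_Ioc_right (min_le_left _ _))
    exact ⟨ε', hε'0, hε'1.le,
      (key_lemma g h F hε'0 hε'1 gc gnn hnn Fnn hFd hF0).1 hg'⟩
  · rintro ⟨ε, hε, _, hint⟩
    set ε' := min ε (1/2) with hε'def
    have hε'0 : 0 < ε' := lt_min hε (by norm_num)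
    have hε'1 : ε' < 1 := lt_of_le_of_lt (min_le_right _ _) (by norm_num)
    have hh' : IntegrableOn h (Ioc 0 ε') :=
      hint.mono_set (Ioc_subset_Ioc_right (min_le_left _ _))
    exact ⟨ε', hε'0, hε'1.le,
      (key_lemma g h F hε'0 hε'1 gc gnn hnn Fnn hFd hF0).2 hh'⟩
end

section
/- For λ in the open unit disc with λ ≠ 0, let I_λ = { e^{iθ} : |arg(λ e^{-iθ})| < (1-|λ|)/2 } and c_λ^{-1} = ∫_{I_λ} (1-|λ|²)/|e^{iθ}-λ|² dθ. Then c_λ^{-1} ≥ 4/5, and consequently the outer function f_λ(z) = exp( c_λ · (1-|λ|²)/|1-λ|² · ∫_{I_λ} (e^{iθ}+z)/(e^{iθ}-z) dθ ) satisfies sup_{|z|<1} |f_λ(z)| ≤ exp( (5π/2) · (1-|λ|²)/|1-λ|² ). -/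
open Set Real Complex MeasureTheory

lemma arg_r_exp {r : ℝ} (hr : 0 < r) {ψ : ℝ} (hψ : ψ ∈ Set.Ioc (-π) π) :
    Complex.arg (↑r * Complex.exp (↑ψ * Complex.I)) = ψ := by
  rw [Complex.arg_real_mul _ hr, Complex.exp_mul_I, Complex.arg_cos_add_sin_mul_I hψ]

lemma one_sub_cos_le (φ : ℝ) : 1 - Real.cos φ ≤ φ ^ 2 / 2 := by
  have h1 := Real.cos_two_mul (φ / 2)
  have h2 := Real.sin_sq_add_cos_sq (φ / 2)
  have h3 : Real.sin (φ / 2) ^ 2 ≤ (φ / 2) ^ 2 := Real.sin_sq_le_sq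
  have h4 : Real.cos φ = 2 * Real.cos (φ / 2) ^ 2 - 1 := by
    rw [← h1]; congr 1; ring
  nlinarith

lemma abs_sq_le {l : ℂ} (hl : ‖l‖ < 1) (hl0 : l ≠ 0) {θ : ℝ}
    (hθ : |Complex.arg (l * Complex.exp (-(θ:ℂ) * Complex.I))| < (1 - ‖l‖) / 2) :
    ‖Complex.exp ((θ:ℂ) * Complex.I) - l‖ ^ 2 ≤ 5 / 4 * (1 - ‖l‖) ^ 2 := by
  have hr0 : 0 ≤ ‖l‖ := norm_nonneg l
  have hr1 : ‖l‖ < 1 := hl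
  set φ := Complex.arg (l * Complex.exp (-(θ:ℂ) * Complex.I)) with hφdef
  have habs : ‖l * Complex.exp (-(θ:ℂ) * Complex.I)‖ = ‖l‖ := by
    rw [norm_mul, show (-(θ:ℂ) * Complex.I) = ((-θ : ℝ) : ℂ) * Complex.I by push_cast; ring,
      Complex.norm_exp_ofReal_mul_I, mul_one]
  have hrep : l * Complex.exp (-(θ:ℂ) * Complex.I)
      = (‖l‖ : ℂ) * Complex.exp ((φ:ℂ) * Complex.I) := by
    conv_lhs => rw [← Complex.norm_mul_exp_arg_mul_I (l * Complex.exp (-(θ:ℂ) * Complex.I))]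
    rw [habs]
  have he : Complex.exp ((θ:ℂ) * Complex.I) * Complex.exp (-(θ:ℂ) * Complex.I) = 1 := by
    rw [← Complex.exp_add, show ((θ:ℂ) * Complex.I + -(θ:ℂ) * Complex.I) = 0 by ring,
      Complex.exp_zero]
  have hfac : Complex.exp ((θ:ℂ) * Complex.I) - l
      = Complex.exp ((θ:ℂ) * Complex.I) * (1 - (‖l‖ : ℂ) * Complex.exp ((φ:ℂ) * Complex.I)) := by
    rw [← hrep]
    linear_combination l * he
  rw [hfac, norm_mul, Complex.norm_exp_ofReal_mul_I, one_mul, Complex.sq_norm]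
  have hns : Complex.normSq (1 - (‖l‖ : ℂ) * Complex.exp ((φ:ℂ) * Complex.I))
      = (1 - ‖l‖ * Real.cos φ) ^ 2 + (‖l‖ * Real.sin φ) ^ 2 := by
    simp [Complex.normSq_apply, Complex.sub_re, Complex.sub_im, Complex.mul_re, Complex.mul_im,
      Complex.exp_ofReal_mul_I_re, Complex.exp_ofReal_mul_I_im]
    ring
  rw [hns]
  have h1 := one_sub_cos_le φ
  have hs := Real.sin_sq_add_cos_sq φ
  have habsφ := abs_lt.mp hθ
  have hc1 := Real.cos_le_one φ
  have hprod : 0 ≤ (1 - ‖l‖) * (1 - Real.cos φ) :=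
    mul_nonneg (by linarith) (by linarith)
  nlinarith [habsφ.1, habsφ.2, sq_nonneg (1 - ‖l‖)]
lemma exp_ne' {z : ℂ} (hz : ‖z‖ < 1) (θ : ℝ) :
    Complex.exp (θ * Complex.I) - z ≠ 0 := by
  intro h
  have h1 : ‖Complex.exp (θ * Complex.I)‖ = 1 := Complex.norm_exp_ofReal_mul_I θ
  rw [sub_eq_zero] at h
  rw [h] at h1
  exact absurd h1 (by linarith)

lemma one_sub_ne {z : ℂ} (hz : ‖z‖ < 1) (θ : ℝ) :
    1 - z * Complex.exp (-(θ:ℂ) * Complex.I) ≠ 0 := by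
  intro h
  have h1 : ‖z * Complex.exp (-(θ:ℂ) * Complex.I)‖ = ‖z‖ := by
    rw [norm_mul, show (-(θ:ℂ) * Complex.I) = ((-θ : ℝ) : ℂ) * Complex.I by push_cast; ring,
      Complex.norm_exp_ofReal_mul_I, mul_one]
  rw [sub_eq_zero] at h
  rw [← h] at h1
  simp at h1
  rw [← h1] at hz
  simp at hz

lemma poisson_full {z : ℂ} (hz : ‖z‖ < 1) :
    (∫ θ in Set.Ioc (-π) π,
      (Complex.exp (θ * Complex.I) + z) / (Complex.exp (θ * Complex.I) - z)) = (2 * π : ℝ) := by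
  have hcont : Continuous fun θ : ℝ =>
      (Complex.exp (θ * Complex.I) + z) / (Complex.exp (θ * Complex.I) - z) := by
    apply Continuous.div
    · fun_prop
    · fun_prop
    · exact fun θ => exp_ne' hz θ
  set F : ℝ → ℂ := fun t =>
    (t : ℂ) - 2 * Complex.I * Complex.log (1 - z * Complex.exp (-(t:ℂ) * Complex.I)) with hF
  have hderiv : ∀ t : ℝ, HasDerivAt F
      ((Complex.exp (t * Complex.I) + z) / (Complex.exp (t * Complex.I) - z)) t := by
    intro t
    have h1 : HasDerivAt (fun s : ℝ => (s : ℂ)) 1 t := Complex.ofRealCLM.hasDerivAt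
    have h2 : HasDerivAt (fun s : ℝ => -(s:ℂ) * Complex.I) (-Complex.I) t := by
      simpa using ((h1.neg).mul_const Complex.I)
    have h3 : HasDerivAt (fun s : ℝ => Complex.exp (-(s:ℂ) * Complex.I))
        (Complex.exp (-(t:ℂ) * Complex.I) * -Complex.I) t := by
      simpa [mul_comm] using (h2.cexp)
    have h4 : HasDerivAt (fun s : ℝ => 1 - z * Complex.exp (-(s:ℂ) * Complex.I))
        (-(z * (Complex.exp (-(t:ℂ) * Complex.I) * -Complex.I))) t := by
      simpa using ((h3.const_mul z).const_sub 1)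
    have hslit : 1 - z * Complex.exp (-(t:ℂ) * Complex.I) ∈ Complex.slitPlane := by
      left
      have hre : (z * Complex.exp (-(t:ℂ) * Complex.I)).re ≤ ‖z‖ := by
        calc (z * Complex.exp (-(t:ℂ) * Complex.I)).re
            ≤ ‖z * Complex.exp (-(t:ℂ) * Complex.I)‖ := Complex.re_le_norm _
          _ = ‖z‖ := by
              rw [norm_mul, show (-(t:ℂ) * Complex.I) = ((-t : ℝ) : ℂ) * Complex.I by push_cast; ring,
                Complex.norm_exp_ofReal_mul_I, mul_one]
      simp only [Complex.sub_re, Complex.one_re]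
      linarith
    have h5 := (h4.clog_real hslit)
    have h6 := h1.sub ((h5.const_mul (2 * Complex.I)))
    convert h6 using 1
    · rfl
    · rfl
    have he : Complex.exp (t * Complex.I) * Complex.exp (-(t:ℂ) * Complex.I) = 1 := by
      rw [← Complex.exp_add, show ((t:ℂ) * Complex.I + -(t:ℂ) * Complex.I) = 0 by ring,
        Complex.exp_zero]
    have hd1 := exp_ne' hz t
    have hd2 := one_sub_ne hz t
    simp only [neg_mul] at he hd2 ⊢
    field_simp
    ring_nf
    linear_combination (2*z - 2*z^2*Complex.exp (-(↑t*Complex.I))) * Complex.I_sq +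
      2*Complex.I^2*z*he
  have key := intervalIntegral.integral_eq_sub_of_hasDerivAt
    (f := F) (a := -π) (b := π)
    (fun t _ => hderiv t) ((hcont.intervalIntegrable _ _))
  have hle : (-π : ℝ) ≤ π := by linarith [Real.pi_pos]
  rw [intervalIntegral.integral_of_le hle] at key
  rw [key]
  have hpi : Complex.exp (-(↑(π:ℝ):ℂ) * Complex.I) = Complex.exp (-(↑(-π:ℝ):ℂ) * Complex.I) := by
    push_cast
    rw [show (-(π:ℂ) * Complex.I) = (π * Complex.I) - 2 * π * Complex.I by ring,
      Complex.exp_sub, Complex.exp_two_pi_mul_I]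
    ring_nf
  simp only [hF]
  rw [hpi]
  push_cast
  ring

set_option maxHeartbeats 1000000 in
theorem stmt5
    (l : ℂ) (hl : ‖l‖ < 1) (hl0 : l ≠ 0)
    (Il : Set ℝ)
    (hIl : Il = {θ ∈ Ioc (-π) π |
        |Complex.arg (l * Complex.exp (-θ * Complex.I))| < (1 - ‖l‖) / 2})
    (cinv : ℝ)
    (hcinv : cinv = ∫ θ in Il,
        (1 - ‖l‖ ^ 2) / ‖Complex.exp (θ * Complex.I) - l‖ ^ 2)
    (fl : ℂ → ℂ)
    (hfl : ∀ z : ℂ, fl z = Complex.exp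
        (((cinv⁻¹ * ((1 - ‖l‖ ^ 2) / ‖1 - l‖ ^ 2) : ℝ) : ℂ) *
          ∫ θ in Il, (Complex.exp (θ * Complex.I) + z) /
            (Complex.exp (θ * Complex.I) - z))) :
    cinv ≥ 4 / 5 ∧
      ∀ z : ℂ, ‖z‖ < 1 →
        ‖fl z‖ ≤
          Real.exp (5 * π / 2 * ((1 - ‖l‖ ^ 2) / ‖1 - l‖ ^ 2)) := by
  have hπ := Real.pi_pos
  have hπ3 := Real.pi_gt_three
  have hr0 : 0 < ‖l‖ := norm_pos_iff.mpr hl0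
  have hr1 : ‖l‖ < 1 := hl
  have haI : Complex.arg l ∈ Set.Ioc (-π) π := Complex.arg_mem_Ioc l
  obtain ⟨ha1, ha2⟩ := haI
  set a := Complex.arg l with hadef
  set δ : ℝ := (1 - ‖l‖) / 2 with hδdef
  have hδ0 : 0 < δ := by rw [hδdef]; linarith
  have hδ2 : δ < 1 / 2 := by rw [hδdef]; linarith
  -- Il is contained in Ioc (-π) π
  have hIoc : Il ⊆ Set.Ioc (-π) π := by rw [hIl]; exact fun θ h => h.1
  -- membership criterion
  have hmem : ∀ θ ψ : ℝ, θ ∈ Set.Ioc (-π) π → ψ ∈ Set.Ioc (-π) π → |ψ| < δ →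
      (a - θ = ψ ∨ a - θ = ψ + 2 * π ∨ a - θ = ψ - 2 * π) → θ ∈ Il := by
    intro θ ψ hθ hψ hψδ hcase
    rw [hIl]
    refine Set.mem_sep hθ ?_
    have key : l * Complex.exp (-(θ:ℂ) * Complex.I)
        = (‖l‖ : ℂ) * Complex.exp ((ψ:ℂ) * Complex.I) := by
      have hstep : l * Complex.exp (-(θ:ℂ) * Complex.I)
          = (‖l‖ : ℂ) * Complex.exp (((a - θ : ℝ) : ℂ) * Complex.I) := by
        conv_lhs => rw [← Complex.norm_mul_exp_arg_mul_I l]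
        rw [mul_assoc, ← Complex.exp_add]
        congr 2
        push_cast
        ring
      rw [hstep]
      congr 1
      rcases hcase with h | h | h
      · rw [h]
      · rw [h]
        push_cast
        rw [show ((ψ:ℂ) + 2 * π) * Complex.I = (ψ:ℂ) * Complex.I + 2 * π * Complex.I by ring,
          Complex.exp_add, Complex.exp_two_pi_mul_I, mul_one]
      · rw [h]
        push_cast
        rw [show ((ψ:ℂ) - 2 * π) * Complex.I = (ψ:ℂ) * Complex.I - 2 * π * Complex.I by ring,
          Complex.exp_sub, Complex.exp_two_pi_mul_I, div_one]
    show |Complex.arg (l * Complex.exp (-(θ:ℂ) * Complex.I))| < δ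
    rw [key, arg_r_exp hr0 hψ]
    exact hψδ
  -- the integrand for part 1
  set g : ℝ → ℝ := fun θ =>
    (1 - ‖l‖ ^ 2) / ‖Complex.exp ((θ:ℂ) * Complex.I) - l‖ ^ 2 with hgdef
  have hexp_ne : ∀ θ : ℝ, Complex.exp ((θ:ℂ) * Complex.I) - l ≠ 0 := fun θ => exp_ne' hl θ
  have hg_cont : Continuous g := by
    rw [hgdef]
    apply Continuous.div continuous_const
    · exact (continuous_norm.comp
        ((Complex.continuous_exp.comp (by fun_prop)).sub continuous_const)).pow 2
    · exact fun θ => ne_of_gt (pow_pos (norm_pos_iff.mpr (hexp_ne θ)) 2)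
  have hg_nonneg : ∀ θ, 0 ≤ g θ := by
    intro θ
    rw [hgdef]
    have h1 : ‖l‖ ^ 2 ≤ 1 := by nlinarith [norm_nonneg l]
    exact div_nonneg (by linarith) (by positivity)
  have hg_intIoc : IntegrableOn g (Set.Ioc (-π) π) := hg_cont.integrableOn_Ioc
  have hg_intIl : IntegrableOn g Il := hg_intIoc.mono_set hIoc
  have hlow : ∀ θ ∈ Il, 4 / (5 * (1 - ‖l‖)) ≤ g θ := by
    intro θ hθm
    rw [hIl] at hθm
    have hb := abs_sq_le hl hl0 hθm.2
    have hpos : 0 < ‖Complex.exp ((θ:ℂ) * Complex.I) - l‖ ^ 2 :=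
      pow_pos (norm_pos_iff.mpr (hexp_ne θ)) 2
    rw [hgdef]
    rw [div_le_div_iff₀ (by linarith) hpos]
    nlinarith [norm_nonneg l]
  have hkey : ∀ u v : ℝ, u ≤ v → Set.Ioo u v ⊆ Il →
      (v - u) * (4 / (5 * (1 - ‖l‖))) ≤ ∫ θ in Set.Ioo u v, g θ := by
    intro u v huv hsub
    have h1 : (∫ _ in Set.Ioo u v, (4 / (5 * (1 - ‖l‖))))
        = (v - u) * (4 / (5 * (1 - ‖l‖))) := by
      rw [MeasureTheory.setIntegral_const, Real.volume_real_Ioo_of_le huv]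
      simp [smul_eq_mul]
    rw [← h1]
    apply MeasureTheory.setIntegral_mono_on
    · exact MeasureTheory.integrableOn_const
        (by rw [Real.volume_Ioo]; exact ENNReal.ofReal_ne_top)
    · exact hg_intIl.mono_set hsub
    · exact measurableSet_Ioo
    · exact fun x hx => hlow x (hsub hx)
  have hmono : ∀ s : Set ℝ, s ⊆ Il → (∫ θ in s, g θ) ≤ ∫ θ in Il, g θ := by
    intro s hs
    exact MeasureTheory.setIntegral_mono_set hg_intIl
      (MeasureTheory.ae_of_all _ hg_nonneg) (HasSubset.Subset.eventuallyLE hs)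
  have hconst : (1 - ‖l‖) * (4 / (5 * (1 - ‖l‖))) = 4 / 5 := by
    have hne : (1 - ‖l‖) ≠ 0 := by linarith
    field_simp
  have hpart1 : cinv ≥ 4 / 5 := by
    have hmain : (4 : ℝ) / 5 ≤ ∫ θ in Il, g θ := by
      rcases le_or_gt a (π - δ) with hA | hB
      · rcases le_or_gt (-π + δ) a with hA2 | hC
        · -- middle case
          have hsub : Set.Ioo (a - δ) (a + δ) ⊆ Il := by
            intro θ hθ
            obtain ⟨h1, h2⟩ := hθ
            refine hmem θ (a - θ) ⟨by linarith, by linarith⟩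
              ⟨by linarith, by linarith⟩ (abs_lt.mpr ⟨by linarith, by linarith⟩) (Or.inl rfl)
          calc (4:ℝ)/5 = (a + δ - (a - δ)) * (4 / (5 * (1 - ‖l‖))) := by
                rw [show a + δ - (a - δ) = 2 * δ by ring, hδdef]
                rw [show 2 * ((1 - ‖l‖)/2) = 1 - ‖l‖ by ring, hconst]
            _ ≤ ∫ θ in Set.Ioo (a - δ) (a + δ), g θ := hkey _ _ (by linarith) hsub
            _ ≤ ∫ θ in Il, g θ := hmono _ hsub
        · -- a < -π + δ : wraparound at -π
          have hsub1 : Set.Ioo (-π) (a + δ) ⊆ Il := by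
            intro θ hθ
            obtain ⟨h1, h2⟩ := hθ
            refine hmem θ (a - θ) ⟨h1, by linarith⟩
              ⟨by linarith, by linarith⟩ (abs_lt.mpr ⟨by linarith, by linarith⟩) (Or.inl rfl)
          have hsub2 : Set.Ioo (a - δ + 2*π) π ⊆ Il := by
            intro θ hθ
            obtain ⟨h1, h2⟩ := hθ
            refine hmem θ (a - θ + 2*π) ⟨by linarith, by linarith⟩
              ⟨by linarith, by linarith⟩ (abs_lt.mpr ⟨by linarith, by linarith⟩)
              (Or.inr (Or.inr (by ring)))
          have hdisj : Disjoint (Set.Ioo (-π) (a + δ)) (Set.Ioo (a - δ + 2*π) π) := by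
            rw [Set.disjoint_left]
            intro x hx1 hx2
            obtain ⟨_, hx12⟩ := hx1
            obtain ⟨hx21, _⟩ := hx2
            linarith
          have hsubU : Set.Ioo (-π) (a + δ) ∪ Set.Ioo (a - δ + 2*π) π ⊆ Il :=
            Set.union_subset hsub1 hsub2
          have hunion : (∫ θ in Set.Ioo (-π) (a + δ) ∪ Set.Ioo (a - δ + 2*π) π, g θ)
              = (∫ θ in Set.Ioo (-π) (a + δ), g θ) + ∫ θ in Set.Ioo (a - δ + 2*π) π, g θ :=
            MeasureTheory.setIntegral_union hdisj measurableSet_Ioo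
              (hg_intIl.mono_set hsub1) (hg_intIl.mono_set hsub2)
          calc (4:ℝ)/5
              = ((a + δ - (-π)) + (π - (a - δ + 2*π))) * (4 / (5 * (1 - ‖l‖))) := by
                rw [show (a + δ - (-π)) + (π - (a - δ + 2*π)) = 2 * δ by ring, hδdef]
                rw [show 2 * ((1 - ‖l‖)/2) = 1 - ‖l‖ by ring, hconst]
            _ ≤ (∫ θ in Set.Ioo (-π) (a + δ), g θ) + ∫ θ in Set.Ioo (a - δ + 2*π) π, g θ := by
                have k1 := hkey (-π) (a + δ) (by linarith) hsub1
                have k2 := hkey (a - δ + 2*π) π (by linarith) hsub2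
                linarith
            _ = ∫ θ in Set.Ioo (-π) (a + δ) ∪ Set.Ioo (a - δ + 2*π) π, g θ := hunion.symm
            _ ≤ ∫ θ in Il, g θ := hmono _ hsubU
      · -- a > π - δ : wraparound at π
        have hsub1 : Set.Ioo (a - δ) π ⊆ Il := by
          intro θ hθ
          obtain ⟨h1, h2⟩ := hθ
          refine hmem θ (a - θ) ⟨by linarith, by linarith⟩
            ⟨by linarith, by linarith⟩ (abs_lt.mpr ⟨by linarith, by linarith⟩) (Or.inl rfl)
        have hsub2 : Set.Ioo (-π) (a + δ - 2*π) ⊆ Il := by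
          intro θ hθ
          obtain ⟨h1, h2⟩ := hθ
          refine hmem θ (a - θ - 2*π) ⟨h1, by linarith⟩
            ⟨by linarith, by linarith⟩ (abs_lt.mpr ⟨by linarith, by linarith⟩)
            (Or.inr (Or.inl (by ring)))
        have hdisj : Disjoint (Set.Ioo (a - δ) π) (Set.Ioo (-π) (a + δ - 2*π)) := by
          rw [Set.disjoint_left]
          intro x hx1 hx2
          obtain ⟨hx11, _⟩ := hx1
          obtain ⟨_, hx22⟩ := hx2
          linarith
        have hsubU : Set.Ioo (a - δ) π ∪ Set.Ioo (-π) (a + δ - 2*π) ⊆ Il :=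
          Set.union_subset hsub1 hsub2
        have hunion : (∫ θ in Set.Ioo (a - δ) π ∪ Set.Ioo (-π) (a + δ - 2*π), g θ)
            = (∫ θ in Set.Ioo (a - δ) π, g θ) + ∫ θ in Set.Ioo (-π) (a + δ - 2*π), g θ :=
          MeasureTheory.setIntegral_union hdisj measurableSet_Ioo
            (hg_intIl.mono_set hsub1) (hg_intIl.mono_set hsub2)
        calc (4:ℝ)/5
            = ((π - (a - δ)) + ((a + δ - 2*π) - (-π))) * (4 / (5 * (1 - ‖l‖))) := by
              rw [show (π - (a - δ)) + ((a + δ - 2*π) - (-π)) = 2 * δ by ring, hδdef]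
              rw [show 2 * ((1 - ‖l‖)/2) = 1 - ‖l‖ by ring, hconst]
          _ ≤ (∫ θ in Set.Ioo (a - δ) π, g θ) + ∫ θ in Set.Ioo (-π) (a + δ - 2*π), g θ := by
              have k1 := hkey (a - δ) π (by linarith) hsub1
              have k2 := hkey (-π) (a + δ - 2*π) (by linarith) hsub2
              linarith
          _ = ∫ θ in Set.Ioo (a - δ) π ∪ Set.Ioo (-π) (a + δ - 2*π), g θ := hunion.symm
          _ ≤ ∫ θ in Il, g θ := hmono _ hsubU
    rw [hcinv]
    exact hmain
  refine ⟨hpart1, ?_⟩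
  -- Part 2
  intro z hz
  set Q : ℝ := (1 - ‖l‖ ^ 2) / ‖1 - l‖ ^ 2 with hQdef
  have hQ0 : 0 ≤ Q := by
    rw [hQdef]
    have h1 : ‖l‖ ^ 2 ≤ 1 := by nlinarith [norm_nonneg l]
    exact div_nonneg (by linarith) (by positivity)
  set f : ℝ → ℂ := fun θ =>
    (Complex.exp ((θ:ℂ) * Complex.I) + z) / (Complex.exp ((θ:ℂ) * Complex.I) - z) with hfdef
  have hf_cont : Continuous f := by
    rw [hfdef]
    exact Continuous.div (by fun_prop) (by fun_prop) (fun θ => exp_ne' hz θ)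
  have hf_intIoc : IntegrableOn f (Set.Ioc (-π) π) := hf_cont.integrableOn_Ioc
  have hf_intIl : IntegrableOn f Il := hf_intIoc.mono_set hIoc
  have hre_nonneg : ∀ θ : ℝ, 0 ≤ (f θ).re := by
    intro θ
    rw [hfdef]
    simp only
    rw [Complex.div_re, ← add_div]
    apply div_nonneg _ (Complex.normSq_nonneg _)
    have h1 : (Complex.exp ((θ:ℂ) * Complex.I)).re = Real.cos θ := Complex.exp_ofReal_mul_I_re θ
    have h2 : (Complex.exp ((θ:ℂ) * Complex.I)).im = Real.sin θ := Complex.exp_ofReal_mul_I_im θ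
    have hz2 : z.re ^ 2 + z.im ^ 2 < 1 := by
      have := Complex.sq_norm z
      rw [Complex.normSq_apply] at this
      nlinarith [norm_nonneg z]
    simp only [Complex.add_re, Complex.sub_re, Complex.add_im, Complex.sub_im, h1, h2]
    nlinarith [Real.sin_sq_add_cos_sq θ]
  have hre_intIoc : IntegrableOn (fun θ => (f θ).re) (Set.Ioc (-π) π) := hf_intIoc.re
  have hX2π : (∫ θ in Il, (f θ).re) ≤ 2 * π := by
    have hle : (∫ θ in Il, (f θ).re) ≤ ∫ θ in Set.Ioc (-π) π, (f θ).re :=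
      MeasureTheory.setIntegral_mono_set hre_intIoc
        (MeasureTheory.ae_of_all _ hre_nonneg) (HasSubset.Subset.eventuallyLE hIoc)
    have heq : (∫ θ in Set.Ioc (-π) π, (f θ).re) = 2 * π := by
      have h1 : (∫ θ in Set.Ioc (-π) π, (f θ).re) = (∫ θ in Set.Ioc (-π) π, f θ).re := by
        simpa [RCLike.re_to_complex] using (_root_.integral_re hf_intIoc)
      rw [h1, hfdef]
      rw [poisson_full hz]
      simp
    linarith
  have hX0 : 0 ≤ ∫ θ in Il, (f θ).re := MeasureTheory.integral_nonneg hre_nonneg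
  have hcinvle : cinv⁻¹ ≤ 5 / 4 := by
    have h1 : cinv⁻¹ ≤ ((4:ℝ)/5)⁻¹ := inv_anti₀ (by norm_num) hpart1
    norm_num at h1
    exact h1
  have hcinv0 : 0 ≤ cinv⁻¹ := inv_nonneg.mpr (by linarith)
  rw [hfl z, Complex.norm_exp]
  apply Real.exp_le_exp.mpr
  have hre_mul : ((((cinv⁻¹ * Q : ℝ) : ℂ)) *
      (∫ θ in Il, f θ)).re = (cinv⁻¹ * Q) * (∫ θ in Il, f θ).re :=
    Complex.re_ofReal_mul _ _
  rw [show (((cinv⁻¹ * ((1 - ‖l‖ ^ 2) / ‖1 - l‖ ^ 2) : ℝ)) : ℂ)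
      = (((cinv⁻¹ * Q : ℝ)) : ℂ) by rw [hQdef]]
  rw [hre_mul]
  have hreint : (∫ θ in Il, f θ).re = ∫ θ in Il, (f θ).re := by
    simpa [RCLike.re_to_complex] using (_root_.integral_re hf_intIl).symm
  rw [hreint]
  calc (cinv⁻¹ * Q) * ∫ θ in Il, (f θ).re
      ≤ (5/4 * Q) * ∫ θ in Il, (f θ).re := by
        apply mul_le_mul_of_nonneg_right _ hX0
        exact mul_le_mul_of_nonneg_right hcinvle hQ0
    _ ≤ (5/4 * Q) * (2 * π) := by
        apply mul_le_mul_of_nonneg_left hX2π (by linarith)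
    _ = 5 * π / 2 * Q := by ring
end

section
/- Let α > 0 and w(t) = log^{α/2}(1/t), and consider the Cantor-set counting: for each N ≥ 1 there are 2^N complementary intervals of length 3^{-N} of the ternary Cantor set in [0,1], and in each dyadic-like scale block [3^{s-N}, 2·3^{s-N}] (0 ≤ s < N) there are 2^s such intervals. Then the series ∑_{N≥1} ∑_{0 ≤ s < N, 3^{-s}(N-s)^{α/2} ≳ 1} 2^s · log⁺(3^{-s}(N-s)^{α/2}) / (N-s)^α is comparable to ∑_{N≥1} N^{ακ/2 − α}, where κ = log 2 / log 3; in particular it diverges if and only if α(1 − κ/2) ≤ 1. -/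
set_option maxHeartbeats 1000000

open Real Finset Filter

lemma aux_summable_of_eventually_le {f g : ℕ → ℝ} (hf : ∀ n, 0 ≤ f n)
    (h : ∀ᶠ n in atTop, f n ≤ g n) (hg : Summable g) : Summable f := by
  obtain ⟨N₀, h'⟩ := eventually_atTop.mp h
  rw [← summable_nat_add_iff N₀]
  exact Summable.of_nonneg_of_le (fun n => hf _) (fun n => h' _ (Nat.le_add_left _ _))
    ((summable_nat_add_iff N₀).mpr hg)

theorem stmt17
    (α : ℝ) (hα : 0 < α)
    (κ : ℝ) (hκ : κ = Real.log 2 / Real.log 3)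
    (c : ℝ) (hc : 0 < c)
    (S : ℕ → ℝ)
    (hS : ∀ N : ℕ, S N = ∑ s ∈ Finset.range N,
        if c ≤ (3:ℝ) ^ (-(s:ℝ)) * ((N:ℝ) - s) ^ (α / 2) then
          (2:ℝ) ^ (s:ℕ) *
            Real.log (max 1 ((3:ℝ) ^ (-(s:ℝ)) * ((N:ℝ) - s) ^ (α / 2))) /
            ((N:ℝ) - s) ^ α
        else 0) :
    (Summable S ↔ Summable (fun N : ℕ => (N:ℝ) ^ (α * κ / 2 - α))) ∧
    (¬ Summable S ↔ α * (1 - κ / 2) ≤ 1) := by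
  have step2 : ∀ N, 0 ≤ S N := by
    intro N
    rw [hS]
    apply Finset.sum_nonneg
    intro s hs
    have hi' : (s:ℝ) + 1 ≤ (N:ℝ) := by exact_mod_cast Finset.mem_range.mp hs
    split
    · apply div_nonneg (mul_nonneg (by positivity) (Real.log_nonneg (le_max_left _ _)))
      exact Real.rpow_nonneg (by linarith) _
    · exact le_refl 0
  have step1 : ∃ K : ℝ, 0 < K ∧ ∀ᶠ N : ℕ in atTop, K * (N:ℝ) ^ (α * κ / 2 - α) ≤ S N := by
      have hlog3 : (1:ℝ) < Real.log 3 := by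
        rw [Real.lt_log_iff_exp_lt (by norm_num)]
        exact lt_of_lt_of_le Real.exp_one_lt_d9 (by norm_num)
      have hlog3pos : (0:ℝ) < Real.log 3 := by linarith
      have hκpos : 0 < κ := by
        rw [hκ]; exact div_pos (Real.log_pos (by norm_num)) hlog3pos
      have h3κ : (3:ℝ) ^ κ = 2 := by
        rw [hκ, Real.rpow_def_of_pos (by norm_num : (0:ℝ) < 3),
          show Real.log 3 * (Real.log 2 / Real.log 3) = Real.log 2 by field_simp,
          Real.exp_log (by norm_num)]
      set M : ℝ := max c (Real.exp 1) with hM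
      have hMc : c ≤ M := le_max_left _ _
      have hMe : Real.exp 1 ≤ M := le_max_right _ _
      have hM1 : 1 ≤ M := le_trans (by linarith [Real.add_one_le_exp 1]) hMe
      have hMpos : 0 < M := by linarith
      set p : ℝ := α * κ / 2 with hp
      have hppos : 0 < p := by positivity
      refine ⟨(2:ℝ) ^ (-p) / M ^ κ / 2, by positivity, ?_⟩
      have hev1 : ∀ᶠ N : ℕ in atTop, 2 ≤ N := eventually_ge_atTop 2
      have hev2 : ∀ᶠ N : ℕ in atTop, Real.log 2 + (2/α) * Real.log M ≤ Real.log N :=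
        (Real.tendsto_log_atTop.comp tendsto_natCast_atTop_atTop).eventually_ge_atTop _
      have hev3 : ∀ᶠ N : ℕ in atTop, 2 * α ≤ (N:ℝ) ^ (1/2 : ℝ) :=
        ((tendsto_rpow_atTop (by norm_num : (0:ℝ) < 1/2)).comp
          tendsto_natCast_atTop_atTop).eventually_ge_atTop _
      filter_upwards [hev1, hev2, hev3] with N h2 hL hhalf
      have hN2 : (2:ℝ) ≤ (N:ℝ) := by exact_mod_cast h2
      have hNpos : (0:ℝ) < N := by linarith
      set Y : ℝ := ((N:ℝ)/2) ^ (α/2) / M with hY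
      have hYpos : 0 < Y := by positivity
      have hY1 : 1 ≤ Y := by
        rw [hY, le_div_iff₀ hMpos, one_mul]
        rw [show M = Real.exp (Real.log M) from (Real.exp_log hMpos).symm,
          show ((N:ℝ)/2) ^ (α/2) = Real.exp ((α/2) * Real.log ((N:ℝ)/2)) by
            rw [← Real.log_rpow (by linarith), Real.exp_log (by positivity)]]
        apply Real.exp_le_exp.2
        rw [Real.log_div (by linarith) (by norm_num)]
        have hlogM : 0 ≤ Real.log M := Real.log_nonneg hM1
        have h' : (2/α) * Real.log M ≤ Real.log N - Real.log 2 := by linarith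
        calc Real.log M = (α/2) * ((2/α) * Real.log M) := by field_simp
        _ ≤ (α/2) * (Real.log N - Real.log 2) :=
            mul_le_mul_of_nonneg_left h' (by positivity)
      set x : ℝ := Real.logb 3 Y with hx
      have hxnn : 0 ≤ x := Real.logb_nonneg (by norm_num) hY1
      have h3x : (3:ℝ) ^ x = Y := Real.rpow_logb (by norm_num) (by norm_num) hYpos
      have hxle : x ≤ (N:ℝ)/2 := by
        have h1 : x ≤ Real.log Y := by
          rw [hx, Real.logb]
          exact div_le_self (Real.log_nonneg hY1) hlog3.le
        have h2' : Real.log Y ≤ (α/2) * Real.log N := by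
          rw [hY, Real.log_div (by positivity) hMpos.ne', Real.log_rpow (by linarith)]
          have h'' : Real.log ((N:ℝ)/2) ≤ Real.log N :=
            Real.log_le_log (by linarith) (by linarith)
          have hlogM : 0 ≤ Real.log M := Real.log_nonneg hM1
          nlinarith
        have h3' : Real.log (N:ℝ) ≤ 2 * (N:ℝ) ^ (1/2:ℝ) := by
          have := Real.log_le_rpow_div hNpos.le (by norm_num : (0:ℝ) < 1/2)
          linarith
        have h4' : (N:ℝ) ^ (1/2:ℝ) * (N:ℝ) ^ (1/2:ℝ) = N := by
          rw [← Real.rpow_add hNpos]; norm_num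
        nlinarith [Real.rpow_nonneg hNpos.le (1/2:ℝ)]
      set s : ℕ := ⌊x⌋₊ with hs
      have hsx : (s:ℝ) ≤ x := Nat.floor_le hxnn
      have hxs : x < s + 1 := Nat.lt_floor_add_one x
      have hsN : s < N := by
        have : (s:ℝ) < N := by linarith
        exact_mod_cast this
      have hm1 : 1 ≤ (N:ℝ) - s := by linarith
      have hmge : (N:ℝ)/2 ≤ (N:ℝ) - s := by linarith
      set X : ℝ := (3:ℝ) ^ (-(s:ℝ)) * ((N:ℝ) - s) ^ (α/2) with hX
      have hXM : M ≤ X := by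
        have e1 : (3:ℝ) ^ (-x) * ((N:ℝ)/2) ^ (α/2) = M := by
          rw [Real.rpow_neg (by norm_num), h3x, hY]
          field_simp
        have e2 : (3:ℝ) ^ (-x) ≤ (3:ℝ) ^ (-(s:ℝ)) :=
          (Real.rpow_le_rpow_left_iff (by norm_num)).2 (by linarith)
        have e3 : ((N:ℝ)/2) ^ (α/2) ≤ ((N:ℝ) - s) ^ (α/2) :=
          Real.rpow_le_rpow (by linarith) hmge (by positivity)
        calc M = (3:ℝ) ^ (-x) * ((N:ℝ)/2) ^ (α/2) := e1.symm
        _ ≤ (3:ℝ) ^ (-(s:ℝ)) * ((N:ℝ) - s) ^ (α/2) :=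
            mul_le_mul e2 e3 (by positivity) (by positivity)
      have hcond : c ≤ X := le_trans hMc hXM
      have hX1 : 1 ≤ X := le_trans hM1 hXM
      have hlogX : 1 ≤ Real.log X := by
        rw [Real.le_log_iff_exp_le (by linarith)]
        exact le_trans hMe hXM
      have h2s : (2:ℝ) ^ (-p) / M ^ κ * (N:ℝ) ^ p / 2 ≤ (2:ℝ) ^ (s:ℕ) := by
        have e0 : ((2:ℝ) ^ (s:ℕ) : ℝ) = (2:ℝ) ^ ((s:ℕ):ℝ) := (Real.rpow_natCast 2 s).symm
        rw [e0]
        have e1 : (2:ℝ) ^ (x - 1) ≤ (2:ℝ) ^ ((s:ℕ):ℝ) :=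
          (Real.rpow_le_rpow_left_iff (by norm_num)).2 (by linarith)
        refine le_trans (le_of_eq ?_) e1
        rw [Real.rpow_sub (by norm_num), Real.rpow_one]
        congr 1
        have e2 : (2:ℝ) ^ x = Y ^ κ := by
          rw [← h3κ, ← Real.rpow_mul (by norm_num : (0:ℝ) ≤ 3), mul_comm κ x,
            Real.rpow_mul (by norm_num : (0:ℝ) ≤ 3), h3x]
        rw [e2, hY, Real.div_rpow (by positivity) hMpos.le,
          Real.div_rpow hNpos.le (by norm_num : (0:ℝ) ≤ 2),
          Real.div_rpow (Real.rpow_nonneg hNpos.le _) (Real.rpow_nonneg (by norm_num) _),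
          ← Real.rpow_mul hNpos.le, ← Real.rpow_mul (by norm_num : (0:ℝ) ≤ 2),
          show α/2*κ = p by rw [hp]; ring, Real.rpow_neg (by norm_num : (0:ℝ) ≤ 2)]
        field_simp
      -- assemble
      have hnonneg : ∀ i ∈ Finset.range N, 0 ≤ (if c ≤ (3:ℝ) ^ (-(i:ℝ)) * ((N:ℝ) - i) ^ (α / 2) then
          (2:ℝ) ^ (i:ℕ) * Real.log (max 1 ((3:ℝ) ^ (-(i:ℝ)) * ((N:ℝ) - i) ^ (α / 2))) /
          ((N:ℝ) - i) ^ α else 0) := by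
        intro i hi
        have hi' : (i:ℝ) + 1 ≤ (N:ℝ) := by exact_mod_cast Finset.mem_range.mp hi
        split
        · apply div_nonneg (mul_nonneg (by positivity) (Real.log_nonneg (le_max_left _ _)))
          exact Real.rpow_nonneg (by linarith) _
        · exact le_refl 0
      have hKK : (2:ℝ) ^ (-p) / M ^ κ / 2 * (N:ℝ) ^ (α * κ / 2 - α)
          = ((2:ℝ) ^ (-p) / M ^ κ * (N:ℝ) ^ p / 2) / (N:ℝ) ^ α := by
        rw [show α * κ / 2 - α = p - α by rw [hp], Real.rpow_sub hNpos]
        ring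
      rw [hKK, hS]
      have hterm : ((2:ℝ) ^ (-p) / M ^ κ * (N:ℝ) ^ p / 2) / (N:ℝ) ^ α
          ≤ (2:ℝ) ^ (s:ℕ) * Real.log (max 1 X) / ((N:ℝ) - s) ^ α := by
        rw [max_eq_right hX1]
        apply div_le_div₀ (by positivity)
        · calc (2:ℝ) ^ (-p) / M ^ κ * (N:ℝ) ^ p / 2 ≤ (2:ℝ) ^ (s:ℕ) := h2s
          _ ≤ (2:ℝ) ^ (s:ℕ) * Real.log X := le_mul_of_one_le_right (by positivity) hlogX
        · positivity
        · exact Real.rpow_le_rpow (by linarith) (by linarith) hα.le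
      calc ((2:ℝ) ^ (-p) / M ^ κ * (N:ℝ) ^ p / 2) / (N:ℝ) ^ α
          ≤ (2:ℝ) ^ (s:ℕ) * Real.log (max 1 X) / ((N:ℝ) - s) ^ α := hterm
        _ = (if c ≤ (3:ℝ) ^ (-(s:ℝ)) * ((N:ℝ) - s) ^ (α / 2) then
              (2:ℝ) ^ (s:ℕ) * Real.log (max 1 ((3:ℝ) ^ (-(s:ℝ)) * ((N:ℝ) - s) ^ (α / 2))) /
              ((N:ℝ) - s) ^ α else 0) := by rw [if_pos hcond]
        _ ≤ _ := Finset.single_le_sum hnonneg (Finset.mem_range.2 hsN)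
  have step3 : α * κ / 2 - α < -1 →
      ∃ β' : ℝ, β' < -1 ∧ ∀ᶠ N : ℕ in atTop, S N ≤ (N:ℝ) ^ β' := by
    intro hβlt
    have hlog3 : (1:ℝ) < Real.log 3 := by
      rw [Real.lt_log_iff_exp_lt (by norm_num)]
      exact lt_of_lt_of_le Real.exp_one_lt_d9 (by norm_num)
    have hlog3pos : (0:ℝ) < Real.log 3 := by linarith
    have hκpos : 0 < κ := by
      rw [hκ]; exact div_pos (Real.log_pos (by norm_num)) hlog3pos
    have h3κ : (3:ℝ) ^ κ = 2 := by
      rw [hκ, Real.rpow_def_of_pos (by norm_num : (0:ℝ) < 3),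
        show Real.log 3 * (Real.log 2 / Real.log 3) = Real.log 2 by field_simp,
        Real.exp_log (by norm_num)]
    set p : ℝ := α * κ / 2 with hp
    have hppos : 0 < p := by positivity
    set β : ℝ := p - α with hβ
    set δ : ℝ := (-1 - β)/2 with hδdef
    have hδ : 0 < δ := by rw [hδdef]; linarith
    refine ⟨β + δ, by rw [hδdef]; linarith, ?_⟩
    set A : ℝ := (α+1)/Real.log 3 + 1 with hA
    have hApos : 0 < A := by positivity
    set C : ℝ := A * (α/2) * (2:ℝ)^α / c^κ with hC
    have hCpos : 0 < C := by positivity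
    -- eventual facts
    have hev1 : ∀ᶠ N : ℕ in atTop, 2 ≤ N := eventually_ge_atTop 2
    have hev2 : ∀ᶠ N : ℕ in atTop, max 1 ((2/α) * |Real.log c|) ≤ Real.log N :=
      (Real.tendsto_log_atTop.comp tendsto_natCast_atTop_atTop).eventually_ge_atTop _
    have hev3 : ∀ᶠ N : ℕ in atTop, 4*α + 4 ≤ (N:ℝ) ^ (1/2 : ℝ) :=
      ((tendsto_rpow_atTop (by norm_num : (0:ℝ) < 1/2)).comp
        tendsto_natCast_atTop_atTop).eventually_ge_atTop _
    have hev4 : ∀ᶠ N : ℕ in atTop,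
        ‖Real.log (N:ℝ) ^ (2:ℝ)‖ ≤ (1/C) * ‖(N:ℝ) ^ δ‖ :=
      tendsto_natCast_atTop_atTop.eventually
        ((isLittleO_log_rpow_rpow_atTop (2:ℝ) hδ).def (by positivity))
    filter_upwards [hev1, hev2, hev3, hev4] with N h2 hL hhalf hlit
    have hN2 : (2:ℝ) ≤ (N:ℝ) := by exact_mod_cast h2
    have hNpos : (0:ℝ) < N := by linarith
    have hlogN1 : 1 ≤ Real.log N := le_trans (le_max_left _ _) hL
    have hlogc : |Real.log c| ≤ (α/2) * Real.log N := by
      have h' : (2/α) * |Real.log c| ≤ Real.log N := le_trans (le_max_right _ _) hL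
      have h'' : (α/2) * ((2/α) * |Real.log c|) ≤ (α/2) * Real.log N :=
        mul_le_mul_of_nonneg_left h' (by positivity)
      calc |Real.log c| = (α/2) * ((2/α) * |Real.log c|) := by field_simp
      _ ≤ (α/2) * Real.log N := h''
    have habs1 : Real.log c ≤ |Real.log c| := le_abs_self _
    have habs2 : -|Real.log c| ≤ Real.log c := neg_abs_le _
    set σ : ℝ := ((α/2) * Real.log N - Real.log c)/Real.log 3 with hσ
    have hσ0 : 0 ≤ σ := by
      apply div_nonneg _ hlog3pos.le
      linarith
    have hnum : (α/2) * Real.log N - Real.log c ≤ (α + 1) * Real.log N := by nlinarith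
    have hσA : σ + 1 ≤ A * Real.log N := by
      have h2' : σ ≤ ((α+1) * Real.log N)/Real.log 3 := by
        rw [hσ]; gcongr
      have h3' : ((α+1) * Real.log N)/Real.log 3 = ((α+1)/Real.log 3) * Real.log N := by ring
      rw [hA]
      nlinarith [h2'.trans_eq h3']
    have hσhalf : σ ≤ (N:ℝ)/2 := by
      have hlogle : Real.log (N:ℝ) ≤ 2 * (N:ℝ) ^ (1/2:ℝ) := by
        have := Real.log_le_rpow_div hNpos.le (by norm_num : (0:ℝ) < 1/2)
        linarith
      have h4' : (N:ℝ) ^ (1/2:ℝ) * (N:ℝ) ^ (1/2:ℝ) = N := by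
        rw [← Real.rpow_add hNpos]; norm_num
      have h5' : σ ≤ (α+1) * Real.log N := by
        calc σ ≤ ((α+1) * Real.log N)/Real.log 3 := by
              rw [hσ]; gcongr
          _ ≤ (α+1) * Real.log N := div_le_self (by nlinarith) hlog3.le
      nlinarith [Real.rpow_nonneg hNpos.le (1/2:ℝ)]
    set U : ℝ := ((N:ℝ)^(α/2)/c)^κ * ((α/2) * Real.log N) / (((N:ℝ)/2)^α) with hU
    have hUnn : 0 ≤ U := by
      apply div_nonneg _ (Real.rpow_nonneg (by linarith) _)
      apply mul_nonneg (Real.rpow_nonneg (by positivity) _)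
      nlinarith
    -- per-term bound
    have hterm : ∀ s ∈ Finset.range N,
        (if c ≤ (3:ℝ) ^ (-(s:ℝ)) * ((N:ℝ) - s) ^ (α / 2) then
            (2:ℝ) ^ (s:ℕ) * Real.log (max 1 ((3:ℝ) ^ (-(s:ℝ)) * ((N:ℝ) - s) ^ (α / 2))) /
            ((N:ℝ) - s) ^ α else 0)
        ≤ (if c ≤ (3:ℝ) ^ (-(s:ℝ)) * ((N:ℝ) - s) ^ (α / 2) then U else 0) := by
      intro s hs
      have hsN : s < N := Finset.mem_range.mp hs
      have hm1 : 1 ≤ (N:ℝ) - s := by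
        have : (s:ℝ) + 1 ≤ (N:ℝ) := by exact_mod_cast hsN
        linarith
      have hmN : (N:ℝ) - s ≤ N := by
        have : (0:ℝ) ≤ s := Nat.cast_nonneg s
        linarith
      split
      case isTrue hcond =>
        set m : ℝ := (N:ℝ) - s with hm
        -- (a) 3^s ≤ N^{α/2}/c
        have h3s : (3:ℝ)^((s:ℝ)) ≤ (N:ℝ)^(α/2)/c := by
          rw [le_div_iff₀ hc]
          have e1 : (3:ℝ)^(-(s:ℝ)) * (3:ℝ)^((s:ℝ)) = 1 := by
            rw [← Real.rpow_add (by norm_num)]; norm_num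
          have e2 : c * (3:ℝ)^((s:ℝ)) ≤ m^(α/2) := by
            calc c * (3:ℝ)^((s:ℝ)) ≤ ((3:ℝ)^(-(s:ℝ)) * m^(α/2)) * (3:ℝ)^((s:ℝ)) :=
                  mul_le_mul_of_nonneg_right hcond (by positivity)
            _ = m^(α/2) * ((3:ℝ)^(-(s:ℝ)) * (3:ℝ)^((s:ℝ))) := by ring
            _ = m^(α/2) := by rw [e1, mul_one]
          calc (3:ℝ)^((s:ℝ)) * c = c * (3:ℝ)^((s:ℝ)) := by ring
          _ ≤ m^(α/2) := e2
          _ ≤ (N:ℝ)^(α/2) := Real.rpow_le_rpow (by linarith) hmN (by positivity)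
        -- (b) s ≤ σ
        have hsσ : (s:ℝ) ≤ σ := by
          have h1 : Real.log ((3:ℝ)^((s:ℝ))) ≤ Real.log ((N:ℝ)^(α/2)/c) :=
            Real.log_le_log (by positivity) h3s
          rw [Real.log_rpow (by norm_num), Real.log_div (by positivity) hc.ne',
            Real.log_rpow hNpos] at h1
          rw [hσ, le_div_iff₀ hlog3pos]
          linarith
        -- (c) 2^s ≤ (N^{α/2}/c)^κ
        have h2s : (2:ℝ)^(s:ℕ) ≤ ((N:ℝ)^(α/2)/c)^κ := by
          have e1 : ((2:ℝ)^(s:ℕ) : ℝ) = ((3:ℝ)^((s:ℝ)))^κ := by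
            rw [← Real.rpow_natCast 2 s, ← h3κ, ← Real.rpow_mul (by norm_num : (0:ℝ) ≤ 3),
              mul_comm κ (s:ℝ), Real.rpow_mul (by norm_num : (0:ℝ) ≤ 3)]
          rw [e1]
          exact Real.rpow_le_rpow (by positivity) h3s hκpos.le
        -- (d) log(max 1 X) ≤ (α/2) log N
        have hlogmax : Real.log (max 1 ((3:ℝ)^(-(s:ℝ)) * m^(α/2))) ≤ (α/2) * Real.log N := by
          have hXle : (3:ℝ)^(-(s:ℝ)) * m^(α/2) ≤ (N:ℝ)^(α/2) := by
            have h31 : (3:ℝ)^(-(s:ℝ)) ≤ 1 :=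
              Real.rpow_le_one_of_one_le_of_nonpos (by norm_num) (neg_nonpos.mpr (Nat.cast_nonneg s))
            calc (3:ℝ)^(-(s:ℝ)) * m^(α/2) ≤ 1 * m^(α/2) :=
                  mul_le_mul_of_nonneg_right h31 (Real.rpow_nonneg (by linarith) _)
            _ = m^(α/2) := one_mul _
            _ ≤ (N:ℝ)^(α/2) := Real.rpow_le_rpow (by linarith) hmN (by positivity)
          have hN1 : 1 ≤ (N:ℝ)^(α/2) := Real.one_le_rpow (by linarith) (by positivity)
          have : max 1 ((3:ℝ)^(-(s:ℝ)) * m^(α/2)) ≤ (N:ℝ)^(α/2) := max_le hN1 hXle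
          calc Real.log (max 1 ((3:ℝ)^(-(s:ℝ)) * m^(α/2))) ≤ Real.log ((N:ℝ)^(α/2)) :=
                Real.log_le_log (by positivity) this
          _ = (α/2) * Real.log N := Real.log_rpow hNpos _
        -- (e) m ≥ N/2
        have hmge : (N:ℝ)/2 ≤ m := by
          have : (s:ℝ) ≤ (N:ℝ)/2 := le_trans hsσ hσhalf
          rw [hm]; linarith
        rw [hU]
        apply div_le_div₀ (by positivity)
        · exact mul_le_mul h2s hlogmax (Real.log_nonneg (le_max_left _ _)) (by positivity)
        · positivity
        · exact Real.rpow_le_rpow (by positivity) hmge hα.le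
      case isFalse => exact le_refl 0
    -- sum bound
    have hsum : S N ≤ (σ + 1) * U := by
      rw [hS]
      calc ∑ s ∈ Finset.range N, (if c ≤ (3:ℝ) ^ (-(s:ℝ)) * ((N:ℝ) - s) ^ (α / 2) then
              (2:ℝ) ^ (s:ℕ) * Real.log (max 1 ((3:ℝ) ^ (-(s:ℝ)) * ((N:ℝ) - s) ^ (α / 2))) /
              ((N:ℝ) - s) ^ α else 0)
          ≤ ∑ s ∈ Finset.range N, (if c ≤ (3:ℝ) ^ (-(s:ℝ)) * ((N:ℝ) - s) ^ (α / 2) then U else 0) :=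
            Finset.sum_le_sum hterm
        _ = ∑ s ∈ (Finset.range N).filter
              (fun s : ℕ => c ≤ (3:ℝ) ^ (-(s:ℝ)) * ((N:ℝ) - s) ^ (α / 2)), U :=
            (Finset.sum_filter _ _).symm
        _ = ((Finset.range N).filter
              (fun s : ℕ => c ≤ (3:ℝ) ^ (-(s:ℝ)) * ((N:ℝ) - s) ^ (α / 2))).card * U := by
            rw [Finset.sum_const, nsmul_eq_mul]
        _ ≤ (σ + 1) * U := by
            apply mul_le_mul_of_nonneg_right _ hUnn
            have hsub : (Finset.range N).filter
                (fun s : ℕ => c ≤ (3:ℝ) ^ (-(s:ℝ)) * ((N:ℝ) - s) ^ (α / 2)) ⊆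
                Finset.range (⌊σ⌋₊ + 1) := by
              intro s hs'
              obtain ⟨hsr, hcond⟩ := Finset.mem_filter.mp hs'
              have hsN : s < N := Finset.mem_range.mp hsr
              have hm1 : 1 ≤ (N:ℝ) - s := by
                have : (s:ℝ) + 1 ≤ (N:ℝ) := by exact_mod_cast hsN
                linarith
              have hmN : (N:ℝ) - s ≤ N := by
                have : (0:ℝ) ≤ s := Nat.cast_nonneg s
                linarith
              have h3s : (3:ℝ)^((s:ℝ)) ≤ (N:ℝ)^(α/2)/c := by
                rw [le_div_iff₀ hc]
                have e1 : (3:ℝ)^(-(s:ℝ)) * (3:ℝ)^((s:ℝ)) = 1 := by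
                  rw [← Real.rpow_add (by norm_num)]; norm_num
                calc (3:ℝ)^((s:ℝ)) * c = c * (3:ℝ)^((s:ℝ)) := by ring
                _ ≤ ((3:ℝ)^(-(s:ℝ)) * ((N:ℝ)-s)^(α/2)) * (3:ℝ)^((s:ℝ)) :=
                      mul_le_mul_of_nonneg_right hcond (by positivity)
                _ = ((N:ℝ)-s)^(α/2) * ((3:ℝ)^(-(s:ℝ)) * (3:ℝ)^((s:ℝ))) := by ring
                _ = ((N:ℝ)-s)^(α/2) := by rw [e1, mul_one]
                _ ≤ (N:ℝ)^(α/2) := Real.rpow_le_rpow (by linarith) hmN (by positivity)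
              have hsσ : (s:ℝ) ≤ σ := by
                have h1 : Real.log ((3:ℝ)^((s:ℝ))) ≤ Real.log ((N:ℝ)^(α/2)/c) :=
                  Real.log_le_log (by positivity) h3s
                rw [Real.log_rpow (by norm_num), Real.log_div (by positivity) hc.ne',
                  Real.log_rpow hNpos] at h1
                rw [hσ, le_div_iff₀ hlog3pos]
                linarith
              exact Finset.mem_range.mpr (Nat.lt_succ_of_le (Nat.le_floor hsσ))
            have hcard := Finset.card_le_card hsub
            rw [Finset.card_range] at hcard
            have : ((⌊σ⌋₊ + 1 : ℕ) : ℝ) ≤ σ + 1 := by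
              push_cast
              have := Nat.floor_le hσ0
              linarith
            exact le_trans (by exact_mod_cast hcard) this
    -- final: (σ+1)*U ≤ N^{β+δ}
    have hfin : (σ + 1) * U ≤ (N:ℝ) ^ (β + δ) := by
      have hUeq : U = ((α/2) * (2:ℝ)^α / c^κ) * Real.log N * (N:ℝ)^β := by
        rw [hU, hβ, Real.rpow_sub hNpos, Real.div_rpow (Real.rpow_nonneg hNpos.le _) hc.le,
          ← Real.rpow_mul hNpos.le, show α/2*κ = p by rw [hp]; ring,
          Real.div_rpow hNpos.le (by norm_num : (0:ℝ) ≤ 2)]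
        field_simp
      have hlogsq : C * (Real.log N * Real.log N) ≤ (N:ℝ)^δ := by
        have h1 : ‖Real.log (N:ℝ) ^ (2:ℝ)‖ = Real.log N * Real.log N := by
          rw [show (2:ℝ) = ((2:ℕ):ℝ) by norm_num, Real.rpow_natCast, Real.norm_eq_abs,
            abs_of_nonneg (by positivity)]
          ring
        have h2' : ‖(N:ℝ)^δ‖ = (N:ℝ)^δ := by
          rw [Real.norm_eq_abs, abs_of_nonneg (Real.rpow_nonneg hNpos.le _)]
        rw [h1, h2'] at hlit
        calc C * (Real.log N * Real.log N) ≤ C * ((1/C) * (N:ℝ)^δ) :=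
              mul_le_mul_of_nonneg_left hlit hCpos.le
        _ = (N:ℝ)^δ := by field_simp
      have hσU : (σ + 1) * U ≤ (A * Real.log N) * U :=
        mul_le_mul_of_nonneg_right hσA hUnn
      have step : (A * Real.log N) * U = C * (Real.log N * Real.log N) * (N:ℝ)^β := by
        rw [hUeq, hC]; ring
      have hNβnn : (0:ℝ) ≤ (N:ℝ)^β := Real.rpow_nonneg hNpos.le _
      calc (σ + 1) * U ≤ (A * Real.log N) * U := hσU
      _ = C * (Real.log N * Real.log N) * (N:ℝ)^β := step
      _ ≤ (N:ℝ)^δ * (N:ℝ)^β := mul_le_mul_of_nonneg_right hlogsq hNβnn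
      _ = (N:ℝ)^(β+δ) := by rw [← Real.rpow_add hNpos]; ring_nf
    exact hsum.trans hfin
  have main : Summable S ↔ Summable (fun N : ℕ => (N:ℝ) ^ (α * κ / 2 - α)) := by
    constructor
    · intro h
      obtain ⟨K, hK, hev⟩ := step1
      refine aux_summable_of_eventually_le (fun n => Real.rpow_nonneg (Nat.cast_nonneg n) _)
        (hev.mono fun N hN => ?_) (h.div_const K)
      rw [le_div_iff₀ hK]
      linarith
    · intro h
      have hβ1 : α * κ / 2 - α < -1 := Real.summable_nat_rpow.mp h
      obtain ⟨β', hβ', hev⟩ := step3 hβ1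
      exact aux_summable_of_eventually_le step2 hev (Real.summable_nat_rpow.mpr hβ')
  refine ⟨main, ?_⟩
  rw [main, Real.summable_nat_rpow, not_lt]
  constructor <;> intro h <;> nlinarith
end
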